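/- Let ω₁, ω₂ be regular majorants, let i, j be orthogonal imaginary units, and let f be a slice regular function on D⁴ whose ℂ(i)-components f₁, f₂ on D_i satisfy ‖f_k(x) − f_k(y)‖ ≤ C_k·ω_k(‖x − y‖) for all x, y ∈ D_i, k = 1, 2. Then there exists C > 0 such that for all q ∈ D⁴, ‖f′(q)‖ ≤ C·(ω₁(1 − ‖q‖) + ω₂(1 − ‖q‖))/(1 − ‖q‖). -/

import Mathlib

noncomputable section

notation "ℍ" => Quaternion ℝ

def IsImaginaryUnit (i : ℍ) : Prop := i.re = 0 ∧ ‖i‖ = 1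

def OrthogonalUnits (i j : ℍ) : Prop :=
  IsImaginaryUnit i ∧ IsImaginaryUnit j ∧ (i * star j).re = 0

def qslice (i : ℍ) : Set ℍ := {z | ∃ x y : ℝ, z = (x : ℍ) + y • i}

def sliceDisc (i : ℍ) : Set ℍ := {z ∈ qslice i | ‖z‖ < 1}

def sliceCircle (i : ℍ) : Set ℍ := {z ∈ qslice i | ‖z‖ = 1}

def unitBall : Set ℍ := {q : ℍ | ‖q‖ < 1}

structure IsMajorant (ω : ℝ → ℝ) : Prop where
  contOn : ContinuousOn ω (Set.Icc 0 2)
  map_zero : ω 0 = 0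
  nonneg : ∀ t ∈ Set.Icc (0:ℝ) 2, 0 ≤ ω t
  mono : MonotoneOn ω (Set.Icc 0 2)
  div_anti : AntitoneOn (fun t => ω t / t) (Set.Ioc 0 2)

def IsRegularMajorant (ω : ℝ → ℝ) : Prop :=
  IsMajorant ω ∧ ∃ C > 0, ∀ x : ℝ, 0 < x → x < 2 →
    (∫ t in (0:ℝ)..x, ω t / t) + x * (∫ t in x..(2:ℝ), ω t / t ^ 2) ≤ C * ω x

def SliceRegularOn (f : ℍ → ℍ) (a : ℕ → ℍ) : Prop :=
  (∀ r : ℝ, 0 ≤ r → r < 1 → Summable (fun n => ‖a n‖ * r ^ n)) ∧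
  (∀ q ∈ unitBall, HasSum (fun n => q ^ n * a n) (f q))

def IsSliceRegular (f : ℍ → ℍ) : Prop := ∃ a : ℕ → ℍ, SliceRegularOn f a

def SliceDeriv (f f' : ℍ → ℍ) (a : ℕ → ℍ) : Prop :=
  SliceRegularOn f a ∧
  (∀ q ∈ unitBall, HasSum (fun n => ((n + 1 : ℕ) : ℝ) • (q ^ n * a (n + 1))) (f' q))

def expI (i : ℍ) (t : ℝ) : ℍ := (Real.cos t : ℍ) + Real.sin t • i

def poisson (i : ℍ) (u : ℍ → ℝ) (q : ℍ) : ℝ :=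
  (1 / (2 * Real.pi)) * ∫ t in (0:ℝ)..(2 * Real.pi),
    u (expI i t) * (1 - ‖q‖ ^ 2) / ‖q - expI i t‖ ^ 2

def comp1 (i : ℍ) (f : ℍ → ℍ) : ℍ → ℍ := fun q => (2⁻¹ : ℝ) • (f q - i * f q * i)

def comp2 (i j : ℍ) (f : ℍ → ℍ) : ℍ → ℍ := fun q => ((2⁻¹ : ℝ) • (f q + i * f q * i)) * j⁻¹

open MeasureTheory intervalIntegral Complex

lemma imu_mul_self {i : ℍ} (hi : IsImaginaryUnit i) : i * i = -1 := by
  have hstar : star i = -i := by ext <;> simp [hi.1]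
  have h1 : Quaternion.normSq i = 1 := by
    rw [Quaternion.normSq_eq_norm_mul_self, hi.2, one_mul]
  have := Quaternion.self_mul_star (a := i)
  rw [hstar, mul_neg, h1] at this
  push_cast at this
  exact neg_eq_iff_eq_neg.mp this

def phi {i : ℍ} (hi : IsImaginaryUnit i) : ℂ →ₐ[ℝ] ℍ := Complex.liftAux i (imu_mul_self hi)

lemma phi_apply {i : ℍ} (hi : IsImaginaryUnit i) (z : ℂ) :
    phi hi z = (z.re : ℍ) + z.im • i := by
  simp [phi, Complex.liftAux_apply]

lemma norm_phi {i : ℍ} (hi : IsImaginaryUnit i) (z : ℂ) :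
    ‖phi hi z‖ = ‖z‖ := by
  have h1 : Quaternion.normSq i = 1 := by
    rw [Quaternion.normSq_eq_norm_mul_self, hi.2, one_mul]
  have h2 : i.imI^2 + i.imJ^2 + i.imK^2 = 1 := by
    have := Quaternion.normSq_def' (a := i)
    rw [h1, hi.1] at this
    linarith [this]
  have key : Quaternion.normSq (phi hi z) = z.re^2 + z.im^2 := by
    rw [phi_apply, Quaternion.normSq_def']
    simp [hi.1]
    ring_nf
    nlinarith [h2]
  have hn := Quaternion.normSq_eq_norm_mul_self (a := phi hi z)
  rw [key] at hn
  have : ‖z‖ * ‖z‖ = z.re^2 + z.im^2 := by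
    rw [← sq, Complex.sq_norm, Complex.normSq_apply]; ring
  nlinarith [norm_nonneg (phi hi z), norm_nonneg z, hn, this]

lemma phi_cont {i : ℍ} (hi : IsImaginaryUnit i) : Continuous (phi hi) :=
  (phi hi).toLinearMap.continuous_of_finiteDimensional

lemma phi_mem_qslice {i : ℍ} (hi : IsImaginaryUnit i) (z : ℂ) : phi hi z ∈ qslice i :=
  ⟨z.re, z.im, (phi_apply hi z)⟩

lemma mem_qslice_exists {i : ℍ} (hi : IsImaginaryUnit i) {w : ℍ} (hw : w ∈ qslice i) :
    ∃ z : ℂ, phi hi z = w := by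
  obtain ⟨x, y, rfl⟩ := hw
  exact ⟨⟨x, y⟩, by rw [phi_apply]⟩

def Phiclm {i : ℍ} (hi : IsImaginaryUnit i) : ℂ →L[ℝ] ℍ :=
  ⟨(phi hi).toLinearMap, phi_cont hi⟩

lemma Phiclm_apply {i : ℍ} (hi : IsImaginaryUnit i) (z : ℂ) : Phiclm hi z = phi hi z := rfl

/-- right multiplication composed with phi, as a CLM -/
def Lphi {i : ℍ} (hi : IsImaginaryUnit i) (c : ℍ) : ℂ →L[ℝ] ℍ :=
  ((ContinuousLinearMap.mul ℝ ℍ).flip c).comp (Phiclm hi)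

lemma Lphi_apply {i : ℍ} (hi : IsImaginaryUnit i) (c : ℍ) (z : ℂ) :
    Lphi hi c z = phi hi z * c := rfl

lemma integral_exp_unit (m : ℤ) :
    ∫ t in (0:ℝ)..(2*Real.pi), Complex.exp ((m:ℂ) * ((t:ℂ) * Complex.I)) =
      if m = 0 then ((2*Real.pi : ℝ) : ℂ) else 0 := by
  rcases eq_or_ne m 0 with h | h
  · simp [h]
  · rw [if_neg h]
    have hc : (m:ℂ) * Complex.I ≠ 0 :=
      mul_ne_zero (by exact_mod_cast h) Complex.I_ne_zero
    have hrw : ∀ t:ℝ, (m:ℂ) * ((t:ℂ) * Complex.I) = ((m:ℂ) * Complex.I) * (t:ℂ) := by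
      intro t; ring
    simp_rw [hrw]
    rw [integral_exp_mul_complex hc]
    have h1 : (m:ℂ) * Complex.I * ((2*Real.pi:ℝ):ℂ) = (m:ℂ) * (2*(Real.pi:ℂ) * Complex.I) := by
      push_cast; ring
    rw [h1, Complex.exp_int_mul_two_pi_mul_I]
    simp

lemma term_integral (ζ:ℂ) (ρ:ℝ) (n k : ℕ) :
    ∫ t in (0:ℝ)..(2*Real.pi), Complex.exp (-((t:ℂ)*Complex.I)) *
        (((ρ:ℂ)*Complex.exp ((t:ℂ)*Complex.I))^k * ζ^(n-k) * (n.choose k : ℂ))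
    = if k = 1 then ((2*Real.pi*ρ:ℝ):ℂ) * ζ^(n-1) * (n.choose 1 : ℂ) else 0 := by
  have key : ∀ t:ℝ, Complex.exp (-((t:ℂ)*Complex.I)) *
        (((ρ:ℂ)*Complex.exp ((t:ℂ)*Complex.I))^k * ζ^(n-k) * (n.choose k : ℂ))
      = ((ρ:ℂ)^k * ζ^(n-k) * (n.choose k:ℂ)) *
          Complex.exp (((((k:ℤ)-1 : ℤ)):ℂ) * ((t:ℂ)*Complex.I)) := by
    intro t
    have e1 : Complex.exp (-((t:ℂ)*Complex.I)) * Complex.exp ((k:ℂ)*((t:ℂ)*Complex.I))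
        = Complex.exp (((((k:ℤ)-1:ℤ)):ℂ)*((t:ℂ)*Complex.I)) := by
      rw [← Complex.exp_add]; congr 1; push_cast; ring
    rw [← e1, mul_pow, ← Complex.exp_nat_mul]; ring
  simp_rw [key]
  rw [intervalIntegral.integral_const_mul, integral_exp_unit]
  have : ((k:ℤ) - 1 = 0) ↔ (k = 1) := by omega
  simp_rw [this]
  split_ifs with hk
  · subst hk; push_cast; ring
  · simp

lemma cauchy_kernel_integral (ζ : ℂ) (ρ : ℝ) (n : ℕ) :
    ∫ t in (0:ℝ)..(2*Real.pi),
      Complex.exp (-((t:ℂ) * Complex.I)) * (ζ + (ρ:ℂ) * Complex.exp ((t:ℂ) * Complex.I)) ^ n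
    = ((2*Real.pi*ρ*(n:ℝ) : ℝ):ℂ) * ζ^(n-1) := by
  have hcomm : ∀ t:ℝ, ζ + (ρ:ℂ)*Complex.exp ((t:ℂ)*Complex.I)
      = (ρ:ℂ)*Complex.exp ((t:ℂ)*Complex.I) + ζ := fun t => add_comm _ _
  simp_rw [hcomm, add_pow, Finset.mul_sum]
  rw [intervalIntegral.integral_finset_sum]
  · simp_rw [term_integral]
    rw [Finset.sum_ite_eq' (Finset.range (n+1)) 1]
    rcases Nat.eq_zero_or_pos n with h0 | hpos
    · subst h0; simp
    · rw [if_pos (Finset.mem_range.mpr (by omega))]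
      rw [Nat.choose_one_right]; push_cast; ring
  · intro k _
    apply Continuous.intervalIntegrable
    fun_prop

lemma cauchy_est {i : ℍ} (hi : IsImaginaryUnit i) {f f' : ℍ → ℍ} {a : ℕ → ℍ}
    (hf : SliceDeriv f f' a) {M : ℝ → ℝ}
    (hmod : ∀ x ∈ sliceDisc i, ∀ y ∈ sliceDisc i, ‖f x - f y‖ ≤ M ‖x - y‖)
    {w : ℍ} (hw : w ∈ sliceDisc i) :
    ‖f' w‖ ≤ M ((1 - ‖w‖)/2) / ((1 - ‖w‖)/2) := by
  obtain ⟨ζ, hζ⟩ := mem_qslice_exists hi hw.1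
  set r : ℝ := ‖w‖ with hrdef
  have hr0 : 0 ≤ r := norm_nonneg w
  have hr1 : r < 1 := hw.2
  have habsζ : ‖ζ‖ = r := by rw [hrdef, ← hζ, norm_phi]
  set ρ : ℝ := (1 - r)/2 with hρdef
  have hρ0 : 0 < ρ := by simp only [hρdef]; linarith
  set R : ℝ := r + ρ with hRdef
  have hR0 : 0 ≤ R := by positivity
  have hR1 : R < 1 := by simp only [hRdef, hρdef]; linarith
  have hrR : r ≤ R := by simp only [hRdef]; linarith
  set c : ℝ → ℂ := fun t => ζ + (ρ:ℂ) * Complex.exp ((t:ℂ) * Complex.I) with hcdef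
  have habsc : ∀ t, ‖c t‖ ≤ R := by
    intro t
    calc ‖c t‖ ≤ ‖ζ‖ + ‖(ρ:ℂ) * Complex.exp ((t:ℂ)*Complex.I)‖ :=
          norm_add_le _ _
    _ = r + ρ := by
        rw [habsζ, norm_mul, Complex.norm_exp]
        simp [abs_of_pos hρ0]
    _ = R := rfl
  have hmemd : ∀ t, phi hi (c t) ∈ sliceDisc i := fun t =>
    ⟨phi_mem_qslice hi _, by rw [norm_phi]; exact lt_of_le_of_lt (habsc t) hR1⟩
  have hmemb : ∀ t, phi hi (c t) ∈ unitBall := fun t => (hmemd t).2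
  have hwb : w ∈ unitBall := hw.2
  -- the series terms
  set F : ℕ → ℝ → ℍ := fun n t =>
    phi hi (Complex.exp (-((t:ℂ)*Complex.I)) * ((c t)^n - ζ^n)) * a n with hFdef
  have habsexp : ∀ t : ℝ, ‖Complex.exp (-((t:ℂ)*Complex.I))‖ = 1 := by
    intro t; rw [Complex.norm_exp]; simp
  -- pointwise HasSum
  have hFsum : ∀ t : ℝ, HasSum (fun n => F n t)
      (phi hi (Complex.exp (-((t:ℂ)*Complex.I))) * (f (phi hi (c t)) - f w)) := by
    intro t
    have h1 : HasSum (fun n => (phi hi (c t))^n * a n) (f (phi hi (c t))) :=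
      hf.1.2 _ (hmemb t)
    have h2 : HasSum (fun n => (phi hi ζ)^n * a n) (f w) := by
      rw [hζ]; exact hf.1.2 _ hwb
    have h3 := (h1.sub h2).mul_left (phi hi (Complex.exp (-((t:ℂ)*Complex.I))))
    have hfn : (fun n => F n t) = fun n => phi hi (Complex.exp (-((t:ℂ)*Complex.I))) *
        ((phi hi (c t))^n * a n - (phi hi ζ)^n * a n) := by
      funext n
      simp only [hFdef, map_mul, map_sub, map_pow]
      rw [mul_assoc, sub_mul]
    rw [hfn]
    exact h3
  have hFcont : ∀ n, Continuous (F n) := by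
    intro n
    apply Continuous.mul _ continuous_const
    apply (phi_cont hi).comp
    fun_prop
  have hFnorm : ∀ n t, ‖F n t‖ ≤ 2 * (‖a n‖ * R^n) := by
    intro n t
    rw [hFdef]
    simp only []
    rw [norm_mul, norm_phi, norm_mul, habsexp, one_mul]
    have h4 : ‖(c t)^n - ζ^n‖ ≤ 2 * R^n := by
      have hb1 : ‖(c t)^n‖ ≤ R^n := by
        rw [norm_pow]
        exact pow_le_pow_left₀ (norm_nonneg _) (habsc t) n
      have hb2 : ‖ζ^n‖ ≤ R^n := by
        rw [norm_pow]
        exact pow_le_pow_left₀ (norm_nonneg _) (by rw [habsζ]; exact hrR) n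
      calc ‖(c t)^n - ζ^n‖ = ‖(c t)^n - ζ^n‖ := rfl
      _ ≤ ‖(c t)^n‖ + ‖ζ^n‖ := norm_sub_le _ _
      _ ≤ R^n + R^n := by exact add_le_add hb1 hb2
      _ = 2 * R^n := by ring
    calc ‖(c t)^n - ζ^n‖ * ‖a n‖ ≤ (2*R^n) * ‖a n‖ := by
          gcongr
    _ = 2 * (‖a n‖ * R^n) := by ring
  have hle : (0:ℝ) ≤ 2*Real.pi := by positivity
  have twopi_pos : (0:ℝ) < 2*Real.pi := by positivity
  have hFint : ∀ n, IntegrableOn (F n) (Set.Ioc 0 (2*Real.pi)) := fun n =>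
    (hFcont n).integrableOn_Ioc
  have hintnorm : ∀ n, (∫ t in Set.Ioc 0 (2*Real.pi), ‖F n t‖) ≤ 2*Real.pi * (2 * (‖a n‖ * R^n)) := by
    intro n
    have h5 : (∫ t in Set.Ioc 0 (2*Real.pi), ‖F n t‖)
        ≤ ∫ _t in Set.Ioc 0 (2*Real.pi), 2 * (‖a n‖ * R^n) := by
      apply setIntegral_mono_on (hFint n).norm
        (integrableOn_const measure_Ioc_lt_top.ne) measurableSet_Ioc
      intro t _
      exact hFnorm n t
    rw [setIntegral_const, Real.volume_real_Ioc_of_le hle, sub_zero,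
      smul_eq_mul] at h5
    exact h5
  have hsummable : Summable (fun n => ∫ t in Set.Ioc 0 (2*Real.pi), ‖F n t‖) := by
    apply Summable.of_nonneg_of_le (fun n => integral_nonneg (fun t => norm_nonneg _)) hintnorm
    exact ((hf.1.1 R hR0 hR1).mul_left 2).mul_left (2*Real.pi)
  have hbig : HasSum (fun n => ∫ t in Set.Ioc 0 (2*Real.pi), F n t)
      (∫ t in Set.Ioc 0 (2*Real.pi),
        phi hi (Complex.exp (-((t:ℂ)*Complex.I))) * (f (phi hi (c t)) - f w)) := by
    have hbig0 := MeasureTheory.hasSum_integral_of_summable_integral_norm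
      (μ := volume.restrict (Set.Ioc 0 (2*Real.pi))) (F := F) hFint hsummable
    have heq : (fun t => ∑' n, F n t) = fun t : ℝ =>
        phi hi (Complex.exp (-((t:ℂ)*Complex.I))) * (f (phi hi (c t)) - f w) :=
      funext fun t => (hFsum t).tsum_eq
    rwa [heq] at hbig0
  have hterm : ∀ n, (∫ t in Set.Ioc 0 (2*Real.pi), F n t)
      = (2*Real.pi*ρ) • ((n:ℝ) • (w^(n-1) * a n)) := by
    intro n
    rw [← intervalIntegral.integral_of_le hle]
    have hFL : ∀ t:ℝ, F n t
        = Lphi hi (a n) (Complex.exp (-((t:ℂ)*Complex.I)) * ((c t)^n - ζ^n)) := fun t => rfl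
    simp_rw [hFL]
    rw [ContinuousLinearMap.intervalIntegral_comp_comm _
      (by apply Continuous.intervalIntegrable; fun_prop)]
    have hJ : (∫ t in (0:ℝ)..(2*Real.pi), Complex.exp (-((t:ℂ)*Complex.I)) * ((c t)^n - ζ^n))
        = ((2*Real.pi*ρ*(n:ℝ) : ℝ):ℂ) * ζ^(n-1) := by
      have hsplit : ∀ t:ℝ, Complex.exp (-((t:ℂ)*Complex.I)) * ((c t)^n - ζ^n)
          = Complex.exp (-((t:ℂ)*Complex.I)) * (ζ + (ρ:ℂ) * Complex.exp ((t:ℂ) * Complex.I))^n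
            - ζ^n * Complex.exp (-((t:ℂ)*Complex.I)) := by
        intro t; rw [hcdef]; ring
      simp_rw [hsplit]
      rw [intervalIntegral.integral_sub (by apply Continuous.intervalIntegrable; fun_prop)
        (by apply Continuous.intervalIntegrable; fun_prop)]
      rw [cauchy_kernel_integral, intervalIntegral.integral_const_mul]
      have hz : (∫ t in (0:ℝ)..(2*Real.pi), Complex.exp (-((t:ℂ)*Complex.I))) = 0 := by
        have hm1 : ∀ t:ℝ, Complex.exp (-((t:ℂ)*Complex.I))
            = Complex.exp ((((-1:ℤ)):ℂ) * ((t:ℂ)*Complex.I)) := by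
          intro t; norm_num
        simp_rw [hm1]
        rw [integral_exp_unit]
        norm_num
      rw [hz, mul_zero, sub_zero]
    rw [hJ]
    have hsm : (((2*Real.pi*ρ*(n:ℝ) : ℝ)):ℂ) * ζ^(n-1) = (2*Real.pi*ρ*(n:ℝ)) • (ζ^(n-1)) := by
      rw [Complex.real_smul]
    rw [hsm, _root_.map_smul, Lphi_apply, map_pow, hζ, smul_smul]
  have hd : HasSum (fun n : ℕ => (n:ℝ) • (w^(n-1) * a n)) (f' w) := by
    apply (hasSum_nat_add_iff' 1).mp
    have h0 : (∑ i ∈ Finset.range 1, (i:ℝ) • (w^(i-1) * a i)) = 0 := by simp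
    rw [h0, sub_zero]
    have hg1 : (fun n : ℕ => ((n+1:ℕ):ℝ) • (w^(n+1-1) * a (n+1)))
        = fun n : ℕ => ((n+1:ℕ):ℝ) • (w^n * a (n+1)) := by
      funext n; norm_num
    exact hg1 ▸ hf.2 w hwb
  have hsum2 : HasSum (fun n : ℕ => (2*Real.pi*ρ) • ((n:ℝ) • (w^(n-1) * a n)))
      ((2*Real.pi*ρ) • f' w) := hd.const_smul _
  have hkey : (∫ t in Set.Ioc 0 (2*Real.pi),
        phi hi (Complex.exp (-((t:ℂ)*Complex.I))) * (f (phi hi (c t)) - f w))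
      = (2*Real.pi*ρ) • f' w := by
    have heq2 : (fun n => ∫ t in Set.Ioc 0 (2*Real.pi), F n t)
        = fun n : ℕ => (2*Real.pi*ρ) • ((n:ℝ) • (w^(n-1) * a n)) := funext hterm
    rw [heq2] at hbig
    exact hbig.unique hsum2
  have hestim : ‖(2*Real.pi*ρ) • f' w‖ ≤ M ρ * (2*Real.pi) := by
    rw [← hkey, ← intervalIntegral.integral_of_le hle]
    have hb := intervalIntegral.norm_integral_le_of_norm_le_const (C := M ρ) (a := (0:ℝ))
      (b := 2*Real.pi)
      (f := fun t => phi hi (Complex.exp (-((t:ℂ)*Complex.I))) * (f (phi hi (c t)) - f w)) ?_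
    · calc ‖∫ t in (0:ℝ)..(2*Real.pi),
          phi hi (Complex.exp (-((t:ℂ)*Complex.I))) * (f (phi hi (c t)) - f w)‖
          ≤ M ρ * |2*Real.pi - 0| := hb
      _ = M ρ * (2*Real.pi) := by rw [sub_zero, _root_.abs_of_nonneg hle]
    · intro t _
      rw [norm_mul, norm_phi, habsexp, one_mul]
      have hdist : ‖phi hi (c t) - w‖ = ρ := by
        rw [← hζ, ← map_sub, norm_phi]
        have hct : c t - ζ = (ρ:ℂ) * Complex.exp ((t:ℂ)*Complex.I) := by rw [hcdef]; ring
        rw [hct, norm_mul, Complex.norm_exp]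
        simp [abs_of_pos hρ0]
      have hm := hmod _ (hmemd t) _ hw
      rwa [hdist] at hm
  have hnorm : ‖(2*Real.pi*ρ) • f' w‖ = (2*Real.pi*ρ) * ‖f' w‖ := by
    rw [norm_smul, Real.norm_eq_abs, abs_of_pos (by positivity)]
  rw [hnorm] at hestim
  rw [le_div_iff₀ hρ0]
  nlinarith [Real.pi_pos, hestim, norm_nonneg (f' w)]

lemma rep_formula {I i : ℍ} (hI : IsImaginaryUnit I) (hi : IsImaginaryUnit i) (w : ℂ) :
    phi hI w = (2⁻¹:ℝ) • (1 - I*i) * phi hi w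
      + (2⁻¹:ℝ) • (1 + I*i) * phi hi (starRingEnd ℂ w) := by
  have hii := imu_mul_self hi
  rw [phi_apply, phi_apply, phi_apply]
  simp only [Complex.conj_re, Complex.conj_im, neg_smul]
  simp only [smul_mul_assoc, sub_mul, add_mul, one_mul, mul_add, mul_sub, mul_smul_comm,
    mul_assoc, hii, mul_neg, mul_one, smul_neg, Quaternion.coe_mul_eq_smul]
  module

theorem stmt14 (ω₁ ω₂ : ℝ → ℝ) (hω₁ : IsRegularMajorant ω₁) (hω₂ : IsRegularMajorant ω₂)
    (i j : ℍ) (hij : OrthogonalUnits i j)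
    (f f' : ℍ → ℍ) (a : ℕ → ℍ) (hf : SliceDeriv f f' a)
    (C₁ C₂ : ℝ)
    (h1 : ∀ x ∈ sliceDisc i, ∀ y ∈ sliceDisc i,
      ‖comp1 i f x - comp1 i f y‖ ≤ C₁ * ω₁ ‖x - y‖)
    (h2 : ∀ x ∈ sliceDisc i, ∀ y ∈ sliceDisc i,
      ‖comp2 i j f x - comp2 i j f y‖ ≤ C₂ * ω₂ ‖x - y‖) :
    ∃ C > 0, ∀ q ∈ unitBall,
      ‖f' q‖ ≤ C * (ω₁ (1 - ‖q‖) + ω₂ (1 - ‖q‖)) / (1 - ‖q‖) := by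
  obtain ⟨hiu, hju, hort⟩ := hij
  classical
  have hj0 : j ≠ 0 := by
    intro h
    have h2' := hju.2
    rw [h, norm_zero] at h2'
    exact one_ne_zero h2'.symm
  have hdecomp : ∀ q : ℍ, comp1 i f q + comp2 i j f q * j = f q := by
    intro q
    unfold comp1 comp2
    rw [mul_assoc _ j⁻¹ j, inv_mul_cancel₀ hj0, mul_one, ← smul_add]
    have h3 : (f q - i * f q * i) + (f q + i * f q * i) = (2:ℝ) • f q := by module
    rw [h3, smul_smul]
    norm_num
  have hmod : ∀ x ∈ sliceDisc i, ∀ y ∈ sliceDisc i,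
      ‖f x - f y‖ ≤ (fun t => C₁ * ω₁ t + C₂ * ω₂ t) ‖x - y‖ := by
    intro x hx y hy
    have hfd : f x - f y = (comp1 i f x - comp1 i f y) + (comp2 i j f x - comp2 i j f y) * j := by
      rw [sub_mul, ← hdecomp x, ← hdecomp y]
      abel
    calc ‖f x - f y‖
        ≤ ‖comp1 i f x - comp1 i f y‖ + ‖(comp2 i j f x - comp2 i j f y) * j‖ := by
          rw [hfd]; exact norm_add_le _ _
      _ = ‖comp1 i f x - comp1 i f y‖ + ‖comp2 i j f x - comp2 i j f y‖ := by
          rw [norm_mul, hju.2, mul_one]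
      _ ≤ C₁ * ω₁ ‖x - y‖ + C₂ * ω₂ ‖x - y‖ := add_le_add (h1 x hx y hy) (h2 x hx y hy)
  refine ⟨4*(|C₁|+|C₂|)+1, by positivity, ?_⟩
  intro q hq
  set r : ℝ := ‖q‖ with hrdef
  have hr0 : 0 ≤ r := norm_nonneg q
  have hr1 : r < 1 := hq
  set I : ℍ := if q.im = 0 then i else ‖q.im‖⁻¹ • q.im with hIdef
  have hIu : IsImaginaryUnit I := by
    rw [hIdef]; split_ifs with h
    · exact hiu
    · constructor
      · simp
      · rw [norm_smul, Real.norm_eq_abs, abs_inv, abs_norm,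
          inv_mul_cancel₀ (norm_ne_zero_iff.mpr h)]
  set ζ : ℂ := ⟨q.re, ‖q.im‖⟩ with hζdef
  have hψ : phi hIu ζ = q := by
    rw [phi_apply]
    show ((q.re : ℝ) : ℍ) + ‖q.im‖ • I = q
    rw [hIdef]; split_ifs with h
    · rw [h, norm_zero, zero_smul, add_zero]
      conv_rhs => rw [← Quaternion.re_add_im q, h, add_zero]
    · rw [smul_smul, mul_inv_cancel₀ (norm_ne_zero_iff.mpr h), one_smul,
        Quaternion.re_add_im]
  have habs : ‖ζ‖ = r := by rw [← norm_phi hIu ζ, hψ]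
  set z : ℍ := phi hiu ζ with hzdef
  set z' : ℍ := phi hiu (starRingEnd ℂ ζ) with hz'def
  have hzn : ‖z‖ = r := by rw [hzdef, norm_phi, habs]
  have hz'n : ‖z'‖ = r := by rw [hz'def, norm_phi, Complex.norm_conj, habs]
  have hzd : z ∈ sliceDisc i := ⟨phi_mem_qslice hiu ζ, by rw [hzn]; exact hr1⟩
  have hz'd : z' ∈ sliceDisc i := ⟨phi_mem_qslice hiu _, by rw [hz'n]; exact hr1⟩
  set P : ℍ := (2⁻¹:ℝ) • (1 - I * i) with hPdef
  set Q : ℍ := (2⁻¹:ℝ) • (1 + I * i) with hQdef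
  have hqn : ∀ n : ℕ, q ^ n = P * z ^ n + Q * z' ^ n := by
    intro n
    rw [← hψ, ← map_pow, rep_formula hIu hiu (ζ^n), hzdef, hz'def, map_pow, map_pow, map_pow]
  have hzsum := hf.2 z (by show ‖z‖ < 1; rw [hzn]; exact hr1)
  have hz'sum := hf.2 z' (by show ‖z'‖ < 1; rw [hz'n]; exact hr1)
  have hcomb := (hzsum.mul_left P).add (hz'sum.mul_left Q)
  have hfq : f' q = P * f' z + Q * f' z' := by
    refine (hf.2 q hq).unique ?_
    have heq3 : (fun n : ℕ => ((n+1:ℕ):ℝ) • (q^n * a (n+1)))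
        = fun n : ℕ => P * (((n+1:ℕ):ℝ) • (z^n * a (n+1)))
          + Q * (((n+1:ℕ):ℝ) • (z'^n * a (n+1))) := by
      funext n
      rw [hqn n, add_mul, mul_assoc, mul_assoc, smul_add, mul_smul_comm, mul_smul_comm]
    rw [heq3]
    exact hcomb
  have hPn : ‖P‖ ≤ 1 := by
    rw [hPdef, norm_smul, Real.norm_eq_abs]
    have : ‖(1:ℍ) - I * i‖ ≤ 2 := by
      calc ‖(1:ℍ) - I * i‖ ≤ ‖(1:ℍ)‖ + ‖I * i‖ := norm_sub_le _ _
      _ = 2 := by rw [norm_one, norm_mul, hIu.2, hiu.2]; norm_num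
    calc |(2⁻¹:ℝ)| * ‖(1:ℍ) - I * i‖ ≤ |(2⁻¹:ℝ)| * 2 := by
          apply mul_le_mul_of_nonneg_left this (abs_nonneg _)
    _ = 1 := by rw [abs_of_pos] <;> norm_num
  have hQn : ‖Q‖ ≤ 1 := by
    rw [hQdef, norm_smul, Real.norm_eq_abs]
    have : ‖(1:ℍ) + I * i‖ ≤ 2 := by
      calc ‖(1:ℍ) + I * i‖ ≤ ‖(1:ℍ)‖ + ‖I * i‖ := norm_add_le _ _
      _ = 2 := by rw [norm_one, norm_mul, hIu.2, hiu.2]; norm_num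
    calc |(2⁻¹:ℝ)| * ‖(1:ℍ) + I * i‖ ≤ |(2⁻¹:ℝ)| * 2 := by
          apply mul_le_mul_of_nonneg_left this (abs_nonneg _)
    _ = 1 := by rw [abs_of_pos] <;> norm_num
  have h6 : ‖f' q‖ ≤ ‖f' z‖ + ‖f' z'‖ := by
    rw [hfq]
    calc ‖P * f' z + Q * f' z'‖ ≤ ‖P * f' z‖ + ‖Q * f' z'‖ := norm_add_le _ _
    _ = ‖P‖ * ‖f' z‖ + ‖Q‖ * ‖f' z'‖ := by rw [norm_mul, norm_mul]
    _ ≤ 1 * ‖f' z‖ + 1 * ‖f' z'‖ :=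
        add_le_add (mul_le_mul_of_nonneg_right hPn (norm_nonneg _))
          (mul_le_mul_of_nonneg_right hQn (norm_nonneg _))
    _ = ‖f' z‖ + ‖f' z'‖ := by ring
  have hbz := cauchy_est (M := fun t => C₁ * ω₁ t + C₂ * ω₂ t) hiu hf hmod hzd
  have hbz' := cauchy_est (M := fun t => C₁ * ω₁ t + C₂ * ω₂ t) hiu hf hmod hz'd
  rw [hzn] at hbz
  rw [hz'n] at hbz'
  set ρ : ℝ := (1 - r)/2 with hρdef
  have hρ0 : 0 < ρ := by rw [hρdef]; linarith
  have hD0 : (0:ℝ) < 1 - r := by linarith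
  have hρIcc : ρ ∈ Set.Icc (0:ℝ) 2 := ⟨le_of_lt hρ0, by rw [hρdef]; linarith⟩
  have hDIcc : (1 - r) ∈ Set.Icc (0:ℝ) 2 := ⟨le_of_lt hD0, by linarith⟩
  have hρD : ρ ≤ 1 - r := by rw [hρdef]; linarith
  have hω1ρ : 0 ≤ ω₁ ρ := hω₁.1.nonneg ρ hρIcc
  have hω2ρ : 0 ≤ ω₂ ρ := hω₂.1.nonneg ρ hρIcc
  have hω1D : 0 ≤ ω₁ (1 - r) := hω₁.1.nonneg _ hDIcc
  have hω2D : 0 ≤ ω₂ (1 - r) := hω₂.1.nonneg _ hDIcc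
  have hm1 : ω₁ ρ ≤ ω₁ (1 - r) := hω₁.1.mono hρIcc hDIcc hρD
  have hm2 : ω₂ ρ ≤ ω₂ (1 - r) := hω₂.1.mono hρIcc hDIcc hρD
  have hMle : C₁ * ω₁ ρ + C₂ * ω₂ ρ ≤ |C₁| * ω₁ (1 - r) + |C₂| * ω₂ (1 - r) := by
    have e1 : C₁ * ω₁ ρ ≤ |C₁| * ω₁ (1 - r) :=
      le_trans (mul_le_mul_of_nonneg_right (le_abs_self C₁) hω1ρ)
        (mul_le_mul_of_nonneg_left hm1 (abs_nonneg _))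
    have e2 : C₂ * ω₂ ρ ≤ |C₂| * ω₂ (1 - r) :=
      le_trans (mul_le_mul_of_nonneg_right (le_abs_self C₂) hω2ρ)
        (mul_le_mul_of_nonneg_left hm2 (abs_nonneg _))
    linarith
  have h7 : ‖f' q‖ ≤ 2 * ((C₁ * ω₁ ρ + C₂ * ω₂ ρ) / ρ) := by
    calc ‖f' q‖ ≤ ‖f' z‖ + ‖f' z'‖ := h6
    _ ≤ (C₁ * ω₁ ρ + C₂ * ω₂ ρ) / ρ + (C₁ * ω₁ ρ + C₂ * ω₂ ρ) / ρ := add_le_add hbz hbz'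
    _ = 2 * ((C₁ * ω₁ ρ + C₂ * ω₂ ρ) / ρ) := by ring
  have h8 : 2 * ((C₁ * ω₁ ρ + C₂ * ω₂ ρ) / ρ)
      ≤ 2 * ((|C₁| * ω₁ (1 - r) + |C₂| * ω₂ (1 - r)) / ρ) := by
    apply mul_le_mul_of_nonneg_left _ (by norm_num : (0:ℝ) ≤ 2)
    exact (div_le_div_iff_of_pos_right hρ0).mpr hMle
  have h9 : 2 * ((|C₁| * ω₁ (1 - r) + |C₂| * ω₂ (1 - r)) / ρ)
      = 4 * (|C₁| * ω₁ (1 - r) + |C₂| * ω₂ (1 - r)) / (1 - r) := by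
    rw [hρdef]
    field_simp
    ring
  have h10 : 4 * (|C₁| * ω₁ (1 - r) + |C₂| * ω₂ (1 - r)) / (1 - r)
      ≤ (4*(|C₁|+|C₂|)+1) * (ω₁ (1 - r) + ω₂ (1 - r)) / (1 - r) := by
    apply (div_le_div_iff_of_pos_right hD0).mpr
    nlinarith [mul_nonneg (abs_nonneg C₁) hω2D, mul_nonneg (abs_nonneg C₂) hω1D, hω1D, hω2D]
  linarith [h7, h8, h9.le, h10]
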